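/- For every real α with −1 < α < −1/2 and every x ∈ [0,1]: every real root of the cubic p_x(y) = −2y³ + 3y² − (2+α)y + x(1+α) lies in [0,1], and p_x has at least two distinct real roots if and only if (1+α)·|x − 1/2| ≤ √(−(1+2α)³/108). -/
import Mathlib


/-- The 'middle of three' cubic `p_x(y) = −2y³ + 3y² − (2+α)y + x(1+α)`. -/
noncomputable def p (α x y : ℝ) : ℝ :=
  -2 * y ^ 3 + 3 * y ^ 2 - (2 + α) * y + x * (1 + α)

theorem stmt_13 (α : ℝ) (hα1 : -1 < α) (hα2 : α < -1 / 2)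
    (x : ℝ) (hx : x ∈ Set.Icc (0 : ℝ) 1) :
    (∀ y : ℝ, p α x y = 0 → y ∈ Set.Icc (0 : ℝ) 1) ∧
    ((∃ y z : ℝ, y ≠ z ∧ p α x y = 0 ∧ p α x z = 0) ↔
      (1 + α) * |x - 1 / 2| ≤ Real.sqrt (-(1 + 2 * α) ^ 3 / 108)) := by
  obtain ⟨hx0, hx1⟩ := hx
  have hα3 : (0:ℝ) < 1 + α := by linarith
  constructor
  · intro y hy
    unfold p at hy
    constructor
    · by_contra h
      push_neg at h
      nlinarith [mul_nonneg hx0 hα3.le,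
        mul_pos (show (0:ℝ) < 2 + α by linarith) (neg_pos.mpr h),
        mul_pos (mul_pos (neg_pos.mpr h) (neg_pos.mpr h)) (neg_pos.mpr h)]
    · by_contra h
      push_neg at h
      nlinarith [mul_nonneg hα3.le (show (0:ℝ) ≤ 1 - x by linarith),
        mul_pos (show (0:ℝ) < y - 1 by linarith)
          (show (0:ℝ) < 2*y^2 - y + 1 + α by
            nlinarith [mul_pos (show (0:ℝ) < 2*y+1 by linarith)
              (show (0:ℝ) < y-1 by linarith)])]
  · set β := Real.sqrt (-(1+2*α)/12) with hβdef
    have hβ2 : β ^ 2 = -(1+2*α)/12 := Real.sq_sqrt (by linarith)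
    have hβpos : 0 < β := Real.sqrt_pos.mpr (by linarith)
    have hβlt : β < 1/2 := by nlinarith
    have hM : Real.sqrt (-(1 + 2 * α) ^ 3 / 108) = (-(1+2*α)/3) * β := by
      rw [show -(1 + 2 * α) ^ 3 / 108 = (-(1+2*α)/3)^2 * (-(1+2*α)/12) by ring,
        Real.sqrt_mul (sq_nonneg _), ← hβdef, Real.sqrt_sq (by linarith)]
    have habs : (1 + α) * |x - 1 / 2| = |(1+α)*(x - 1/2)| := by
      rw [abs_mul, abs_of_nonneg hα3.le]
    constructor
    · rintro ⟨y, z, hyz, hy, hz⟩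
      unfold p at hy hz
      have h0 : (y - z) * ((-2*(y^2+y*z+z^2)+3*(y+z)) - (2+α)) = 0 := by
        linear_combination hy - hz
      have hα' : α = -2*(y^2+y*z+z^2)+3*(y+z) - 2 := by
        rcases mul_eq_zero.mp h0 with h | h
        · exact absurd h (sub_ne_zero.mpr hyz)
        · linarith
      rw [habs]
      apply Real.abs_le_sqrt
      have e1 : (1+α)*(x - 1/2) = 2*y^3 - 3*y^2 + (2+α)*y - (1+α)/2 := by
        linear_combination hy
      have key : -(1+2*α)^3/108 - ((1+α)*(x - 1/2))^2
          = 4/27*((y-z)*(2*y+z-3/2)*(y+2*z-3/2))^2 := by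
        rw [e1, hα']; ring
      linarith [sq_nonneg ((y-z)*(2*y+z-3/2)*(y+2*z-3/2)), key]
    · intro h
      rw [hM, habs] at h
      have hd1 : -((-(1+2*α)/3) * β) ≤ (1+α)*(x - 1/2) := by
        have := neg_abs_le ((1+α)*(x - 1/2)); linarith
      have hd2 : (1+α)*(x - 1/2) ≤ (-(1+2*α)/3) * β := by
        have := le_abs_self ((1+α)*(x - 1/2)); linarith
      have eplus : p α x (1/2 + β) = (-(1+2*α)/3) * β + (1+α)*(x - 1/2) := by
        unfold p; linear_combination (-2*β) * hβ2
      have eminus : p α x (1/2 - β) = -((-(1+2*α)/3) * β) + (1+α)*(x - 1/2) := by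
        unfold p; linear_combination (2*β) * hβ2
      have hpp : 0 ≤ p α x (1/2 + β) := by rw [eplus]; linarith
      have hpm : p α x (1/2 - β) ≤ 0 := by rw [eminus]; linarith
      have hp0 : 0 ≤ p α x 0 := by
        have : p α x 0 = x * (1+α) := by unfold p; ring
        rw [this]; exact mul_nonneg hx0 hα3.le
      have hp1 : p α x 1 ≤ 0 := by
        have : p α x 1 = -((1+α) * (1-x)) := by unfold p; ring
        rw [this]
        exact neg_nonpos.mpr (mul_nonneg hα3.le (by linarith))
      have hcont : Continuous (p α x) := by unfold p; fun_prop
      obtain ⟨y, hymem, hyroot⟩ :=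
        intermediate_value_Icc' (by linarith : (0:ℝ) ≤ 1/2 - β)
          hcont.continuousOn ⟨hpm, hp0⟩
      obtain ⟨z, hzmem, hzroot⟩ :=
        intermediate_value_Icc' (by linarith : (1/2 + β : ℝ) ≤ 1)
          hcont.continuousOn ⟨hp1, hpp⟩
      exact ⟨y, z, by
        have h1 := hymem.2
        have h2 := hzmem.1
        exact ne_of_lt (by linarith), hyroot, hzroot⟩
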